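/- Let A, B be real symmetric n×n matrices with B positive definite, let λ_max be the largest generalized eigenvalue of (A,B), and let α ≥ 0 and μ ∈ ℝ. If μ − α‖B^{-1}‖₂ ≥ λ_max, then A − μB + αI ⪯ A − (μ − α‖B^{-1}‖₂)B ⪯ 0. -/

import Mathlib

open Matrix

/-- Euclidean norm on `Fin n → ℝ`. -/
noncomputable def euclNorm {n : ℕ} (x : Fin n → ℝ) : ℝ := Real.sqrt (∑ i, x i ^ 2)

/-- Spectral (ℓ²-operator) norm of a real `n×n` matrix. -/
noncomputable def matSpectralNorm {n : ℕ} (A : Matrix (Fin n) (Fin n) ℝ) : ℝ :=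
  sSup {r : ℝ | ∃ x : Fin n → ℝ, euclNorm x = 1 ∧ r = euclNorm (A.mulVec x)}

private lemma euclNorm_smul {n : ℕ} (c : ℝ) (x : Fin n → ℝ) :
    euclNorm (c • x) = |c| * euclNorm x := by
  unfold euclNorm
  rw [← Real.sqrt_sq_eq_abs, ← Real.sqrt_mul (sq_nonneg c), Finset.mul_sum]
  congr 1
  exact Finset.sum_congr rfl fun i _ => by simp [mul_pow]

private lemma euclNorm_pos {n : ℕ} {x : Fin n → ℝ} (hx : x ≠ 0) : 0 < euclNorm x := by
  unfold euclNorm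
  apply Real.sqrt_pos.2
  obtain ⟨i, hi⟩ := Function.ne_iff.1 hx
  exact Finset.sum_pos' (fun j _ => sq_nonneg _)
    ⟨i, Finset.mem_univ i, by have : x i ≠ 0 := hi; positivity⟩

/-- A real symmetric matrix all of whose eigenvalues are nonnegative is PSD. -/
private lemma psd_of_eigen {n : ℕ} {M : Matrix (Fin n) (Fin n) ℝ} (hM : M.IsHermitian)
    (h : ∀ (t : ℝ) (w : Fin n → ℝ), w ≠ 0 → M.mulVec w = t • w → 0 ≤ t) :
    M.PosSemidef := by
  apply hM.posSemidef_iff_eigenvalues_nonneg.mpr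
  intro i
  refine h _ (⇑(hM.eigenvectorBasis i)) ?_ (hM.mulVec_eigenvectorBasis i)
  have h0 := hM.eigenvectorBasis.orthonormal.ne_zero i
  intro hc
  apply h0
  ext j
  exact congrFun hc j

set_option maxHeartbeats 1000000 in
theorem shifted_matrix_negSemidef {n : ℕ}
    (A B : Matrix (Fin n) (Fin n) ℝ) (hA : A.IsSymm) (hB : B.PosDef)
    (lmax : ℝ)
    (hev : ∃ v : Fin n → ℝ, v ≠ 0 ∧ A.mulVec v = lmax • B.mulVec v)
    (hmax : ∀ (lam : ℝ) (v : Fin n → ℝ), v ≠ 0 →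
      A.mulVec v = lam • B.mulVec v → lam ≤ lmax)
    (α μ : ℝ) (hα : 0 ≤ α)
    (h : lmax ≤ μ - α * matSpectralNorm B⁻¹) :
    ((A - (μ - α * matSpectralNorm B⁻¹) • B) - (A - μ • B + α • (1 : Matrix (Fin n) (Fin n) ℝ))).PosSemidef
      ∧ (-(A - (μ - α * matSpectralNorm B⁻¹) • B)).PosSemidef := by
  rcases Nat.eq_zero_or_pos n with hn | hn
  · subst hn
    have triv : ∀ M : Matrix (Fin 0) (Fin 0) ℝ, M.PosSemidef :=
      fun M => PosSemidef.of_dotProduct_mulVec_nonneg (by ext i j; exact i.elim0) fun x => by simp [dotProduct]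
    exact ⟨triv _, triv _⟩
  have hBH : B.IsHermitian := hB.1
  have hBt : Bᵀ = B := by
    rw [← conjTranspose_eq_transpose_of_trivial]; exact hBH.eq
  have hAH : A.IsHermitian := by
    rw [Matrix.IsHermitian, conjTranspose_eq_transpose_of_trivial]; exact hA
  set s : ℝ := matSpectralNorm B⁻¹ with hs
  set S : Set ℝ := {r : ℝ | ∃ x : Fin n → ℝ, euclNorm x = 1 ∧ r = euclNorm (B⁻¹.mulVec x)}
    with hS
  have hsS : s = sSup S := rfl
  -- the set is bounded above
  have hbdd : BddAbove S := by
    refine ⟨Real.sqrt (∑ i, ∑ j, (B⁻¹ i j) ^ 2), ?_⟩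
    rintro r ⟨x, hx1, rfl⟩
    unfold euclNorm
    apply Real.sqrt_le_sqrt
    have hx2 : ∑ j, x j ^ 2 = 1 := by
      have := hx1
      unfold euclNorm at this
      exact Real.sqrt_eq_one.1 this
    refine Finset.sum_le_sum fun i _ => ?_
    have hcs := Finset.sum_mul_sq_le_sq_mul_sq Finset.univ (fun j => B⁻¹ i j) x
    have : (B⁻¹.mulVec x) i = ∑ j, B⁻¹ i j * x j := rfl
    rw [this]
    calc (∑ j, B⁻¹ i j * x j) ^ 2 ≤ (∑ j, (B⁻¹ i j) ^ 2) * ∑ j, x j ^ 2 := hcs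
      _ = ∑ j, (B⁻¹ i j) ^ 2 := by rw [hx2, mul_one]
  -- invertibility facts
  have hdetB : IsUnit B.det := isUnit_iff_ne_zero.2 (ne_of_gt hB.det_pos)
  have hBBinv : B * B⁻¹ = 1 := mul_nonsing_inv B hdetB
  have hBinvB : B⁻¹ * B = 1 := nonsing_inv_mul B hdetB
  -- positivity of s
  have hs_pos : 0 < s := by
    set x0 : Fin n → ℝ := Pi.single ⟨0, hn⟩ 1 with hx0def
    have hx0 : euclNorm x0 = 1 := by
      unfold euclNorm
      rw [show ∑ i, x0 i ^ 2 = 1 by simp [hx0def, Pi.single_apply], Real.sqrt_one]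
    have hy0 : B⁻¹.mulVec x0 ≠ 0 := by
      intro hcon
      have hx00 : x0 = 0 := by
        have h1 : B.mulVec (B⁻¹.mulVec x0) = x0 := by
          rw [Matrix.mulVec_mulVec, hBBinv, Matrix.one_mulVec]
        rw [hcon, Matrix.mulVec_zero] at h1
        exact h1.symm
      have : x0 ⟨0, hn⟩ = 1 := by simp [hx0def]
      rw [hx00] at this
      simpa using this
    exact lt_of_lt_of_le (euclNorm_pos hy0) (le_csSup hbdd ⟨x0, hx0, rfl⟩)
  -- eigenvalues of B are at least s⁻¹
  have eig_lb : ∀ (ρ : ℝ) (w : Fin n → ℝ), w ≠ 0 → B.mulVec w = ρ • w → s⁻¹ ≤ ρ := by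
    intro ρ w hw hBw
    have hnw : 0 < euclNorm w := euclNorm_pos hw
    have hww : 0 < ∑ i, w i ^ 2 := Real.sqrt_pos.1 hnw
    have hρ : 0 < ρ := by
      have h2 := hB.dotProduct_mulVec_pos hw
      rw [hBw] at h2
      have : star w ⬝ᵥ (ρ • w) = ρ * ∑ i, w i ^ 2 := by
        simp [dotProduct, Finset.mul_sum, sq]
        exact Finset.sum_congr rfl fun i _ => by ring
      rw [this] at h2
      nlinarith
    have hBinvw : B⁻¹.mulVec w = ρ⁻¹ • w := by
      have h1 : B⁻¹.mulVec (B.mulVec w) = w := by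
        rw [Matrix.mulVec_mulVec, hBinvB, Matrix.one_mulVec]
      rw [hBw, Matrix.mulVec_smul] at h1
      calc B⁻¹.mulVec w = ρ⁻¹ • (ρ • B⁻¹.mulVec w) := by
            rw [smul_smul, inv_mul_cancel₀ (ne_of_gt hρ), one_smul]
        _ = ρ⁻¹ • w := by rw [h1]
    set u : Fin n → ℝ := (euclNorm w)⁻¹ • w with hu
    have hu1 : euclNorm u = 1 := by
      rw [hu, euclNorm_smul, abs_of_pos (inv_pos.2 hnw), inv_mul_cancel₀ (ne_of_gt hnw)]
    have hBu : B⁻¹.mulVec u = ((euclNorm w)⁻¹ * ρ⁻¹) • w := by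
      rw [hu, Matrix.mulVec_smul, hBinvw, smul_smul]
    have hval : euclNorm (B⁻¹.mulVec u) = ρ⁻¹ := by
      rw [hBu, euclNorm_smul, abs_of_pos (by positivity)]
      field_simp
    have hmem : euclNorm (B⁻¹.mulVec u) ≤ s := le_csSup hbdd ⟨u, hu1, rfl⟩
    rw [hval] at hmem
    have := inv_anti₀ (inv_pos.2 hρ) hmem
    rwa [inv_inv] at this
  -- s • B - 1 is PSD
  have PSD_sB1 : ((s • B - 1 : Matrix (Fin n) (Fin n) ℝ)).PosSemidef := by
    apply psd_of_eigen
    · simp [Matrix.IsHermitian, conjTranspose_sub, conjTranspose_smul, conjTranspose_one, hBt]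
    · intro t w hw hevw
      have h1 : s • B.mulVec w - w = t • w := by
        rw [← hevw, Matrix.sub_mulVec, Matrix.smul_mulVec, Matrix.one_mulVec]
      have h2 : s • B.mulVec w = (t + 1) • w := by
        rw [add_smul, one_smul, ← h1]; abel
      have h3 : B.mulVec w = (s⁻¹ * (t + 1)) • w := by
        calc B.mulVec w = s⁻¹ • (s • B.mulVec w) := by
              rw [smul_smul, inv_mul_cancel₀ (ne_of_gt hs_pos), one_smul]
          _ = s⁻¹ • ((t + 1) • w) := by rw [h2]
          _ = (s⁻¹ * (t + 1)) • w := smul_smul _ _ _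
      have h4 := eig_lb _ w hw h3
      have hsi : 0 < s⁻¹ := inv_pos.2 hs_pos
      nlinarith
  constructor
  · -- first conjunct
    have hD1 : (A - (μ - α * s) • B) - (A - μ • B + α • (1 : Matrix (Fin n) (Fin n) ℝ))
        = α • (s • B - 1) := by
      ext i j
      simp [Matrix.sub_apply, Matrix.add_apply, Matrix.smul_apply, Matrix.one_apply, smul_eq_mul]
      split_ifs <;> ring
    rw [hD1]
    refine PosSemidef.of_dotProduct_mulVec_nonneg ?_ ?_
    · simp [Matrix.IsHermitian, conjTranspose_smul, conjTranspose_sub, conjTranspose_one, hBt]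
    · intro x
      have h0 := PSD_sB1.dotProduct_mulVec_nonneg x
      rw [Matrix.smul_mulVec, dotProduct_smul, smul_eq_mul]
      exact mul_nonneg hα h0
  · -- second conjunct
    set c : ℝ := μ - α * s with hc
    have hPSB := hB.posSemidef
    obtain ⟨C, hCps, hCC⟩ : ∃ C : Matrix (Fin n) (Fin n) ℝ, C.PosSemidef ∧ C * C = B :=
      open scoped MatrixOrder in ⟨CFC.sqrt B, nonneg_iff_posSemidef.1 (CFC.sqrt_nonneg B), CFC.sqrt_mul_sqrt_self B (nonneg_iff_posSemidef.2 hPSB)⟩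
    have hCH : C.IsHermitian := hCps.1
    have hdetC : IsUnit C.det := by
      refine isUnit_iff_ne_zero.2 fun hcon => ?_
      have : B.det = 0 := by rw [← hCC, det_mul, hcon, mul_zero]
      exact hB.det_pos.ne' this
    have hCCi : C * C⁻¹ = 1 := mul_nonsing_inv C hdetC
    have hCiC : C⁻¹ * C = 1 := nonsing_inv_mul C hdetC
    set M := C⁻¹ * A * C⁻¹ with hMdef
    have hCiH : (C⁻¹).IsHermitian := hCH.inv
    have hMH : M.IsHermitian := by
      have : M = C⁻¹ * A * (C⁻¹)ᴴ := by rw [hCiH.eq]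
      rw [this]
      exact isHermitian_mul_mul_conjTranspose _ hAH
    have hMt : Mᵀ = M := by
      rw [← conjTranspose_eq_transpose_of_trivial]; exact hMH.eq
    have hN : ((c • (1 : Matrix (Fin n) (Fin n) ℝ) - M)).PosSemidef := by
      apply psd_of_eigen
      · simp [Matrix.IsHermitian, conjTranspose_sub, conjTranspose_smul, conjTranspose_one, hMt]
      · intro t w hw hevw
        have hMw : M.mulVec w = (c - t) • w := by
          have h1 : c • w - M.mulVec w = t • w := by
            rw [← hevw, Matrix.sub_mulVec, Matrix.smul_mulVec, Matrix.one_mulVec]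
          have h2 : M.mulVec w = c • w - t • w := by rw [← h1]; abel
          rw [h2, ← sub_smul]
        set v := C⁻¹.mulVec w with hv
        have hvne : v ≠ 0 := by
          intro hcon
          apply hw
          have h1 : C.mulVec v = w := by
            rw [hv, Matrix.mulVec_mulVec, hCCi, Matrix.one_mulVec]
          rw [hcon, Matrix.mulVec_zero] at h1
          exact h1.symm
        have hAv : A.mulVec v = (c - t) • B.mulVec v := by
          have h2 : C.mulVec (M.mulVec w) = C.mulVec ((c - t) • w) := by rw [hMw]
          have hL : C.mulVec (M.mulVec w) = A.mulVec v := by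
            rw [hv, Matrix.mulVec_mulVec, Matrix.mulVec_mulVec, hMdef,
              ← Matrix.mul_assoc, ← Matrix.mul_assoc, hCCi, Matrix.one_mul]
          have hR : C.mulVec ((c - t) • w) = (c - t) • B.mulVec v := by
            rw [Matrix.mulVec_smul, hv, Matrix.mulVec_mulVec, ← hCC,
              Matrix.mul_assoc, hCCi, Matrix.mul_one]
          rw [hL, hR] at h2
          exact h2
        have h5 := hmax (c - t) v hvne hAv
        have h6 : lmax ≤ c := h
        linarith
    have hfin : (C * (c • (1 : Matrix (Fin n) (Fin n) ℝ) - M) * Cᴴ).PosSemidef :=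
      hN.mul_mul_conjTranspose_same C
    have hkey : C * (c • (1 : Matrix (Fin n) (Fin n) ℝ) - M) * Cᴴ = c • B - A := by
      rw [hCH.eq, Matrix.mul_sub, Matrix.sub_mul]
      congr 1
      · rw [Matrix.mul_smul, Matrix.mul_one, Matrix.smul_mul, hCC]
      · rw [hMdef, ← Matrix.mul_assoc, ← Matrix.mul_assoc, hCCi, Matrix.one_mul,
          Matrix.mul_assoc, hCiC, Matrix.mul_one]
    rw [neg_sub, ← hkey]
    exact hfin
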